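/- Let (x_t, y_t) be sequences in E and F respectively and E_t a sequence of reals with 0 < E_t ≤ E* for all t and a fixed E* > 0. Suppose for every t ≥ 0: (i) ∇_y f(x_t, y_t) = 0, (ii) f(x_t, y_t) − f(x_{t+1}, y_t) ≥ (1/(2·E_t))·‖∇_x f(x_t, y_t)‖², and (iii) f(x_{t+1}, y_{t+1}) ≤ f(x_{t+1}, y_t). If in addition f is bounded from below, then ‖∇ f(x_t, y_t)‖ → 0 as t → ∞. -/

import Mathlib

/-- Vanishing-gradient conclusion of Theorem 1: if `f` is bounded below and
`0 < Eₜ ≤ E*`, then `‖∇ f(xₜ, yₜ)‖ → 0`. -/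
theorem two_block_gradient_tendsto_zero
    {E F : Type*} [NormedAddCommGroup E] [InnerProductSpace ℝ E] [CompleteSpace E]
    [NormedAddCommGroup F] [InnerProductSpace ℝ F] [CompleteSpace F]
    (f : E × F → ℝ) (hf : Differentiable ℝ f)
    (x : ℕ → E) (y : ℕ → F) (Et : ℕ → ℝ)
    (Estar : ℝ) (hEstar : 0 < Estar)
    (hE : ∀ t, 0 < Et t ∧ Et t ≤ Estar)
    (h1 : ∀ t, gradient (fun y' => f (x t, y')) (y t) = 0)
    (h2 : ∀ t, f (x t, y t) - f (x (t + 1), y t) ≥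
      (1 / (2 * Et t)) * ‖gradient (fun x' => f (x', y t)) (x t)‖ ^ 2)
    (h3 : ∀ t, f (x (t + 1), y (t + 1)) ≤ f (x (t + 1), y t))
    (hbdd : ∃ B : ℝ, ∀ p : E × F, B ≤ f p) :
    Filter.Tendsto
      (fun t =>
        Real.sqrt
          (‖gradient (fun x' => f (x', y t)) (x t)‖ ^ 2 +
            ‖gradient (fun y' => f (x t, y')) (y t)‖ ^ 2))
      Filter.atTop (nhds 0) := by
  obtain ⟨B, hB⟩ := hbdd
  set a : ℕ → ℝ := fun t => f (x t, y t) with ha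
  set g : ℕ → ℝ := fun t => ‖gradient (fun x' => f (x', y t)) (x t)‖ ^ 2 with hg
  have hgnn : ∀ t, 0 ≤ g t := fun t => sq_nonneg _
  have hstep : ∀ t, a t - a (t + 1) ≥ (1 / (2 * Estar)) * g t := by
    intro t
    have h2t := h2 t
    have h3t := h3 t
    have h1' : (1 / (2 * Estar)) * g t ≤ (1 / (2 * Et t)) * g t := by
      apply mul_le_mul_of_nonneg_right _ (hgnn t)
      apply one_div_le_one_div_of_le (by linarith [(hE t).1])
      linarith [(hE t).2]
    have : a t - a (t + 1) ≥ a t - f (x (t + 1), y t) := by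
      simp only [ha]; linarith
    calc (1 / (2 * Estar)) * g t ≤ (1 / (2 * Et t)) * g t := h1'
      _ ≤ a t - f (x (t + 1), y t) := h2t
      _ ≤ a t - a (t + 1) := by simp only [ha]; linarith
  have hanti : Antitone a := by
    apply antitone_nat_of_succ_le
    intro t
    have := hstep t
    have := mul_nonneg (by positivity : (0:ℝ) ≤ 1 / (2 * Estar)) (hgnn t)
    linarith
  have hbdd' : BddBelow (Set.range a) := ⟨B, by rintro _ ⟨t, rfl⟩; exact hB _⟩
  have hconv : Filter.Tendsto a Filter.atTop (nhds (⨅ t, a t)) :=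
    tendsto_atTop_ciInf hanti hbdd'
  have hdiff : Filter.Tendsto (fun t => a t - a (t + 1)) Filter.atTop (nhds 0) := by
    have := hconv.sub (hconv.comp (Filter.tendsto_add_atTop_nat 1))
    simpa using this
  have hg0 : Filter.Tendsto g Filter.atTop (nhds 0) := by
    apply squeeze_zero hgnn (g := fun t => (2 * Estar) * (a t - a (t + 1)))
    · intro t
      have := hstep t
      rw [ge_iff_le, div_mul_eq_mul_div, one_mul,
        div_le_iff₀ (by positivity : (0:ℝ) < 2 * Estar)] at this
      linarith [this]
    · simpa using hdiff.const_mul (2 * Estar)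
  have : Filter.Tendsto (fun t => Real.sqrt (g t + ‖gradient (fun y' => f (x t, y')) (y t)‖ ^ 2))
      Filter.atTop (nhds 0) := by
    have heq : (fun t => Real.sqrt (g t + ‖gradient (fun y' => f (x t, y')) (y t)‖ ^ 2))
        = fun t => Real.sqrt (g t) := by
      funext t; rw [h1 t]; simp
    rw [heq]
    have := (Real.continuous_sqrt.tendsto 0).comp hg0
    simpa [Function.comp_def] using this
  exact this
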